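/- arXiv:1509.09112 — 2 statements merged into one kernel-verified Lean document; each statement's English description precedes it below -/
import Mathlib

section
/- Let N ≥ 2 be an integer, α > 0 and t > 1. Then for every β > t there exists a constant C = C(β, t) > 0 such that for all s ∈ ℝ, ( e^{α|s|^{N/(N−1)}} − S_{N−2}(α, s) )^t ≤ C ( e^{βα|s|^{N/(N−1)}} − S_{N−2}(βα, s) ). -/
open MeasureTheory Real Filter Metric

/-- `S_{N-2}(α, s) := ∑_{k=0}^{N-2} (α^k / k!) |s|^{Nk/(N-1)}`. -/
noncomputable def SN (N : ℕ) (α s : ℝ) : ℝ :=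
  ∑ k ∈ Finset.range (N - 1), α ^ k / (Nat.factorial k) *
    |s| ^ (((N : ℝ) * k) / ((N : ℝ) - 1))

private noncomputable def gfun (m : ℕ) (x : ℝ) : ℝ :=
  Real.exp x - ∑ k ∈ Finset.range m, x ^ k / (Nat.factorial k)

private lemma gsum_lower (m : ℕ) (x : ℝ) (hx : 0 ≤ x) :
    x ^ m / (Nat.factorial m) ≤ gfun m x := by
  have h := Real.sum_le_exp_of_nonneg hx (m + 1)
  rw [Finset.sum_range_succ] at h
  simp only [gfun]
  linarith

private lemma gsum_nonneg (m : ℕ) (x : ℝ) (hx : 0 ≤ x) : 0 ≤ gfun m x := by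
  have h := gsum_lower m x hx
  have h2 : (0:ℝ) ≤ x ^ m / (Nat.factorial m) :=
    div_nonneg (pow_nonneg hx m) (Nat.cast_nonneg _)
  linarith

private lemma exp_tsum (x : ℝ) : Real.exp x = ∑' n : ℕ, x ^ n / (Nat.factorial n : ℝ) := by
  rw [Real.exp_eq_exp_ℝ, NormedSpace.exp_eq_tsum_div]

private lemma gsum_le_exp (m : ℕ) (x : ℝ) (hx : 0 ≤ x) : gfun m x ≤ Real.exp x := by
  have h2 : (0:ℝ) ≤ ∑ k ∈ Finset.range m, x ^ k / (Nat.factorial k) := by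
    apply Finset.sum_nonneg; intro k _; positivity
  simp only [gfun]; linarith

private lemma gsum_upper (m : ℕ) (x : ℝ) (hx : 0 ≤ x) :
    gfun m x ≤ x ^ m / (Nat.factorial m) * Real.exp x := by
  have hsum : Summable (fun n : ℕ => x ^ n / (Nat.factorial n : ℝ)) :=
    Real.summable_pow_div_factorial x
  have hsplit : (∑ i ∈ Finset.range m, x ^ i / (Nat.factorial i : ℝ)) +
      ∑' i : ℕ, x ^ (i + m) / (Nat.factorial (i + m) : ℝ) =
      ∑' i : ℕ, x ^ i / (Nat.factorial i : ℝ) :=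
    Summable.sum_add_tsum_nat_add m hsum
  have hs2 : Summable (fun n : ℕ => x ^ (n + m) / (Nat.factorial (n + m) : ℝ)) :=
    (summable_nat_add_iff (f := fun n : ℕ => x ^ n / (Nat.factorial n : ℝ)) m).2 hsum
  have key : (∑' n : ℕ, x ^ (n + m) / (Nat.factorial (n + m) : ℝ)) ≤
      x ^ m / (Nat.factorial m) * Real.exp x := by
    rw [exp_tsum x, ← tsum_mul_left]
    refine Summable.tsum_le_tsum (fun n => ?_) hs2 (hsum.mul_left _)
    have hfact : ((Nat.factorial n : ℝ) * Nat.factorial m) ≤ (Nat.factorial (n + m) : ℝ) := by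
      exact_mod_cast Nat.le_of_dvd (Nat.factorial_pos _)
        (Nat.factorial_mul_factorial_dvd_factorial_add n m)
    calc x ^ (n + m) / (Nat.factorial (n + m) : ℝ)
        ≤ x ^ (n + m) / ((Nat.factorial n : ℝ) * Nat.factorial m) := by
          gcongr
      _ = x ^ m / (Nat.factorial m : ℝ) * (x ^ n / (Nat.factorial n : ℝ)) := by
          rw [pow_add, div_mul_div_comm]
          ring
  have heq : gfun m x = ∑' n : ℕ, x ^ (n + m) / (Nat.factorial (n + m) : ℝ) := by
    simp only [gfun]
    rw [exp_tsum x]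
    linarith
  rw [heq]
  exact key

private lemma key_lemma (m : ℕ) (hm : 1 ≤ m) (t β : ℝ) (ht : 1 < t) (hβ : t < β) :
    ∃ C > 0, ∀ x : ℝ, 0 ≤ x → gfun m x ^ t ≤ C * gfun m (β * x) := by
  have hβ1 : 1 < β := lt_trans ht hβ
  have hβ0 : 0 < β := by linarith
  have hfm : (0:ℝ) < Nat.factorial m := by exact_mod_cast Nat.factorial_pos m
  set R : ℝ := 1 + 2 * m * (Nat.factorial m) with hR
  have hR1 : 1 ≤ R := by
    have : (0:ℝ) ≤ 2 * m * (Nat.factorial m) := by positivity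
    rw [hR]; linarith
  have hR0 : 0 < R := by linarith
  set C1 : ℝ := (Real.exp R / Nat.factorial m) ^ t * R ^ ((m : ℝ) * (t - 1)) *
      (Nat.factorial m / β ^ m) with hC1
  have hC1pos : 0 < C1 := by
    have h1 : (0:ℝ) < (Real.exp R / Nat.factorial m) ^ t :=
      Real.rpow_pos_of_pos (by positivity) _
    have h2 : (0:ℝ) < R ^ ((m : ℝ) * (t - 1)) := Real.rpow_pos_of_pos hR0 _
    have h3 : (0:ℝ) < (Nat.factorial m : ℝ) / β ^ m := by positivity
    rw [hC1]; positivity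
  refine ⟨C1 + 2, by linarith, fun x hx => ?_⟩
  have hgx0 : 0 ≤ gfun m x := gsum_nonneg m x hx
  have hgβ0 : 0 ≤ gfun m (β * x) := gsum_nonneg m _ (by positivity)
  rcases eq_or_lt_of_le hx with hx0 | hx0
  · -- x = 0
    have hg0 : gfun m 0 = 0 := by
      simp only [gfun]
      rw [Finset.sum_eq_single 0 (fun b _ hb => by simp [zero_pow hb])
        (fun h => absurd (Finset.mem_range.mpr hm) h)]
      simp
    subst hx0
    rw [mul_zero, hg0, Real.zero_rpow (by linarith : (0:ℝ) < t).ne']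
    simp
  · rcases le_or_gt x R with hxR | hxR
    · -- small case : 0 < x ≤ R
      have h1 : gfun m x ≤ x ^ m / Nat.factorial m * Real.exp R := by
        calc gfun m x ≤ x ^ m / Nat.factorial m * Real.exp x := gsum_upper m x hx
          _ ≤ x ^ m / Nat.factorial m * Real.exp R := by
              gcongr
      have h2 : gfun m x ^ t ≤ (x ^ m / Nat.factorial m * Real.exp R) ^ t :=
        Real.rpow_le_rpow hgx0 h1 (by linarith)
      have h3 : (x ^ m / Nat.factorial m * Real.exp R) ^ t =
          (Real.exp R / Nat.factorial m) ^ t * x ^ ((m : ℝ) * t) := by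
        have he : x ^ m / Nat.factorial m * Real.exp R =
            (Real.exp R / Nat.factorial m) * x ^ m := by ring
        rw [he, Real.mul_rpow (by positivity) (by positivity),
          ← Real.rpow_natCast x m, ← Real.rpow_mul hx]
      have h4 : x ^ ((m : ℝ) * t) = x ^ ((m : ℝ) * (t - 1)) * x ^ m := by
        rw [← Real.rpow_natCast x m, ← Real.rpow_add hx0]
        congr 1
        ring
      have h5 : x ^ ((m : ℝ) * (t - 1)) ≤ R ^ ((m : ℝ) * (t - 1)) :=
        Real.rpow_le_rpow hx hxR (mul_nonneg (Nat.cast_nonneg m) (by linarith))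
      have h6 : x ^ m ≤ Nat.factorial m / β ^ m * gfun m (β * x) := by
        have hlow := gsum_lower m (β * x) (by positivity)
        have hbm : (β * x) ^ m = β ^ m * x ^ m := mul_pow β x m
        have hlow2 : β ^ m * x ^ m / Nat.factorial m ≤ gfun m (β * x) := by
          rw [← hbm]; exact hlow
        calc x ^ m = Nat.factorial m / β ^ m * (β ^ m * x ^ m / Nat.factorial m) := by
              field_simp
          _ ≤ Nat.factorial m / β ^ m * gfun m (β * x) := by
              gcongr
      have hmul : x ^ ((m : ℝ) * (t - 1)) * x ^ m ≤
          R ^ ((m : ℝ) * (t - 1)) * (Nat.factorial m / β ^ m * gfun m (β * x)) :=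
        mul_le_mul h5 h6 (pow_nonneg hx m) (Real.rpow_nonneg hR0.le _)
      calc gfun m x ^ t ≤ (Real.exp R / Nat.factorial m) ^ t * x ^ ((m : ℝ) * t) := by
            rw [← h3]; exact h2
        _ = (Real.exp R / Nat.factorial m) ^ t * (x ^ ((m : ℝ) * (t - 1)) * x ^ m) := by
            rw [h4]
        _ ≤ (Real.exp R / Nat.factorial m) ^ t *
            (R ^ ((m : ℝ) * (t - 1)) * (Nat.factorial m / β ^ m * gfun m (β * x))) :=
            mul_le_mul_of_nonneg_left hmul (Real.rpow_nonneg (by positivity) _)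
        _ = C1 * gfun m (β * x) := by rw [hC1]; ring
        _ ≤ (C1 + 2) * gfun m (β * x) := by
            nlinarith [mul_nonneg hC1pos.le hgβ0]
    · -- large case : x > R
      set y : ℝ := β * x with hy
      have hx1 : 1 ≤ x := le_trans hR1 hxR.le
      have hy1 : 1 ≤ y := by rw [hy]; nlinarith
      have hy0 : (0:ℝ) ≤ y := by linarith
      have hyR : 2 * m * (Nat.factorial m : ℝ) ≤ y := by
        have hxy : x ≤ y := by rw [hy]; nlinarith
        have hRy : 2 * m * (Nat.factorial m : ℝ) ≤ R := by rw [hR]; linarith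
        linarith [hxR.le]
      have hS : (∑ k ∈ Finset.range m, y ^ k / (Nat.factorial k : ℝ)) ≤ Real.exp y / 2 := by
        have hstep : ∀ k ∈ Finset.range m, y ^ k / (Nat.factorial k : ℝ) ≤ y ^ (m - 1) := by
          intro k hk
          have hk' : k ≤ m - 1 := by
            have := Finset.mem_range.1 hk; omega
          have hp1 : y ^ k ≤ y ^ (m - 1) := pow_le_pow_right₀ hy1 hk'
          have hp2 : (1:ℝ) ≤ (Nat.factorial k : ℝ) := by
            exact_mod_cast Nat.one_le_iff_ne_zero.2 (Nat.factorial_pos k).ne'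
          calc y ^ k / (Nat.factorial k : ℝ) ≤ y ^ k / 1 := by
                gcongr
                
            _ = y ^ k := div_one _
            _ ≤ y ^ (m - 1) := hp1
        have hsum : (∑ k ∈ Finset.range m, y ^ k / (Nat.factorial k : ℝ)) ≤
            m * y ^ (m - 1) := by
          calc (∑ k ∈ Finset.range m, y ^ k / (Nat.factorial k : ℝ)) ≤
              ∑ _k ∈ Finset.range m, y ^ (m - 1) := Finset.sum_le_sum hstep
            _ = m * y ^ (m - 1) := by
                rw [Finset.sum_const, Finset.card_range, nsmul_eq_mul]
        have hexp : y ^ m / (Nat.factorial m : ℝ) ≤ Real.exp y := by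
          have h := gsum_lower m y hy0
          have h2 := gsum_le_exp m y hy0
          linarith
        have hym : y ^ m = y * y ^ (m - 1) := by
          conv_lhs => rw [show m = 1 + (m - 1) by omega]
          rw [pow_add, pow_one]
        have hpm0 : (0:ℝ) ≤ y ^ (m - 1) := pow_nonneg hy0 _
        have hfinal : (m : ℝ) * y ^ (m - 1) ≤ y ^ m / (2 * Nat.factorial m) := by
          rw [hym, le_div_iff₀ (by positivity)]
          nlinarith [mul_nonneg (sub_nonneg.2 hyR) hpm0]
        have hlast : y ^ m / (2 * Nat.factorial m) ≤ Real.exp y / 2 := by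
          rw [div_le_div_iff₀ (by positivity) (by norm_num)]
          calc y ^ m * 2 = (y ^ m / Nat.factorial m) * (2 * Nat.factorial m) := by
                field_simp
            _ ≤ Real.exp y * (2 * Nat.factorial m) := by gcongr
        linarith
      have hgy : Real.exp y / 2 ≤ gfun m y := by
        simp only [gfun]
        linarith
      have h7 : gfun m x ^ t ≤ Real.exp x ^ t :=
        Real.rpow_le_rpow hgx0 (gsum_le_exp m x hx) (by linarith)
      have h8 : Real.exp x ^ t = Real.exp (x * t) := (Real.exp_mul x t).symm
      have h9 : Real.exp (x * t) ≤ Real.exp y := by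
        apply Real.exp_le_exp.2
        rw [hy]
        nlinarith
      calc gfun m x ^ t ≤ Real.exp y := by rw [h8] at h7; linarith
        _ ≤ 2 * gfun m y := by linarith
        _ ≤ (C1 + 2) * gfun m y := by
            linarith [mul_nonneg hC1pos.le hgβ0]

theorem pow_truncated_exp_le (N : ℕ) (hN : 2 ≤ N) (α t : ℝ) (hα : 0 < α) (ht : 1 < t) :
    ∀ β > t, ∃ C > 0, ∀ s : ℝ,
      (Real.exp (α * |s| ^ ((N : ℝ) / ((N : ℝ) - 1))) - SN N α s) ^ t ≤
        C * (Real.exp (β * α * |s| ^ ((N : ℝ) / ((N : ℝ) - 1))) - SN N (β * α) s) := by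
  intro β hβ
  obtain ⟨C, hC, hmain⟩ := key_lemma (N - 1) (by omega) t β ht hβ
  refine ⟨C, hC, fun s => ?_⟩
  set q : ℝ := (N : ℝ) / ((N : ℝ) - 1) with hq
  set p : ℝ := |s| ^ q with hp
  have hp0 : 0 ≤ p := Real.rpow_nonneg (abs_nonneg s) q
  have hN1 : ((N : ℝ) - 1) ≠ 0 := by
    have : (2:ℝ) ≤ (N : ℝ) := by exact_mod_cast hN
    linarith
  have hSN : ∀ γ : ℝ, SN N γ s = ∑ k ∈ Finset.range (N - 1), (γ * p) ^ k /
      (Nat.factorial k : ℝ) := by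
    intro γ
    unfold SN
    apply Finset.sum_congr rfl
    intro k _
    have habs : |s| ^ (((N : ℝ) * k) / ((N : ℝ) - 1)) = p ^ k := by
      rw [hp, ← Real.rpow_natCast (|s| ^ q) k, ← Real.rpow_mul (abs_nonneg s)]
      congr 1
      rw [hq]
      ring
    rw [habs, mul_pow]
    ring
  have h1 := hmain (α * p) (by positivity)
  have hβα : β * α * p = β * (α * p) := by ring
  rw [hSN α, hSN (β * α), hβα]
  exact h1
end

section
/- Let N ≥ 2 be an integer, α_0 > 0, and let f : ℝ → ℝ be continuous such that for every α > α_0 one has |f(s)|e^{−α|s|^{N/(N−1)}} → 0 as |s| → ∞, and f(s)/|s|^{N−1} → 0 as s → 0. Then for every η > 0, every α > α_0 and every q ≥ 0 there exists a constant C > 0 such that for all s ∈ ℝ, |f(s)s| ≤ η|s|^N + C|s|^q ( e^{α|s|^{N/(N−1)}} − S_{N−2}(α, s) ). -/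
open MeasureTheory Real Filter

set_option maxHeartbeats 1600000

lemma SN_eq (N : ℕ) (α s : ℝ) :
    SN N α s = ∑ k ∈ Finset.range (N - 1),
      (α * |s| ^ ((N : ℝ) / ((N : ℝ) - 1))) ^ k / (Nat.factorial k) := by
  unfold SN
  refine Finset.sum_congr rfl fun k _ => ?_
  rw [mul_pow, ← Real.rpow_natCast (|s| ^ ((N : ℝ) / ((N : ℝ) - 1))) k,
    ← Real.rpow_mul (abs_nonneg s)]
  have : (N : ℝ) / ((N : ℝ) - 1) * (k : ℝ) = (N : ℝ) * (k : ℝ) / ((N : ℝ) - 1) := by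
    ring
  rw [this]
  ring

/-- quadratic lower bound for exp -/
lemma sq_div_four_le_exp (x : ℝ) (hx : 0 ≤ x) : x ^ 2 / 4 ≤ Real.exp x := by
  have h := Real.add_one_le_exp (x / 2)
  have h2 : Real.exp (x / 2) * Real.exp (x / 2) = Real.exp x := by
    rw [← Real.exp_add]; ring_nf
  nlinarith [Real.exp_pos (x / 2)]

/-- partial sums are eventually at most half of exp -/
lemma S_half (n : ℕ) (hn : 1 ≤ n) (x : ℝ) (hx1 : 1 ≤ x)
    (hx : 2 * n * (Nat.factorial (n + 1)) ≤ x) :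
    ∑ k ∈ Finset.range n, x ^ k / (Nat.factorial k) ≤ Real.exp x / 2 := by
  have hx0 : 0 ≤ x := by linarith
  have hsum : ∑ k ∈ Finset.range n, x ^ k / (Nat.factorial k) ≤ n * x ^ (n - 1) := by
    have hterm : ∀ k ∈ Finset.range n, x ^ k / (Nat.factorial k) ≤ x ^ (n - 1) := by
      intro k hk
      have hk' : k ≤ n - 1 := by
        have := Finset.mem_range.mp hk; omega
      have h1 : x ^ k ≤ x ^ (n - 1) := pow_le_pow_right₀ hx1 hk'
      have h2 : (1 : ℝ) ≤ (Nat.factorial k : ℝ) := by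
        exact_mod_cast Nat.one_le_iff_ne_zero.mpr (Nat.factorial_ne_zero k)
      calc x ^ k / (Nat.factorial k : ℝ) ≤ x ^ k / 1 := by
            apply div_le_div_of_nonneg_left (pow_nonneg hx0 k) one_pos h2
        _ = x ^ k := by ring
        _ ≤ x ^ (n - 1) := h1
    calc ∑ k ∈ Finset.range n, x ^ k / (Nat.factorial k)
        ≤ ∑ _k ∈ Finset.range n, x ^ (n - 1) := Finset.sum_le_sum hterm
      _ = n * x ^ (n - 1) := by simp [Finset.sum_const, mul_comm]
  have hexp : x ^ (n + 1) / (Nat.factorial (n + 1)) ≤ Real.exp x := by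
    have h1 : x ^ (n + 1) / (Nat.factorial (n + 1) : ℝ) ≤
        ∑ k ∈ Finset.range (n + 2), x ^ k / (Nat.factorial k) := by
      apply Finset.single_le_sum (f := fun k => x ^ k / (Nat.factorial k : ℝ))
      · intro i _
        positivity
      · exact Finset.mem_range.mpr (by omega)
    exact h1.trans (Real.sum_le_exp_of_nonneg hx0 (n + 2))
  -- now  n * x^(n-1) ≤ x^(n+1) / (2 * (n+1)!)
  have hfac : (0 : ℝ) < (Nat.factorial (n + 1) : ℝ) := by
    exact_mod_cast (Nat.factorial_pos (n + 1))
  have hpow : x ^ (n + 1) = x ^ (n - 1) * x ^ 2 := by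
    rw [← pow_add]; congr 1; omega
  have hxx : 2 * n * (Nat.factorial (n + 1) : ℝ) ≤ x ^ 2 := by
    nlinarith
  have hkey : (n : ℝ) * x ^ (n - 1) ≤ x ^ (n + 1) / (2 * (Nat.factorial (n + 1))) := by
    rw [hpow, le_div_iff₀ (by positivity)]
    nlinarith [pow_nonneg hx0 (n - 1)]
  have h9 : x ^ (n + 1) / (2 * (Nat.factorial (n + 1) : ℝ)) =
      (x ^ (n + 1) / (Nat.factorial (n + 1) : ℝ)) / 2 := by ring
  linarith

theorem critical_growth_estimate (N : ℕ) (hN : 2 ≤ N) (α₀ : ℝ) (hα₀ : 0 < α₀)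
    (f : ℝ → ℝ) (hf : Continuous f)
    (hcrit : ∀ α > α₀,
      Tendsto (fun s : ℝ => |f s| * Real.exp (-(α * |s| ^ ((N : ℝ) / ((N : ℝ) - 1)))))
        (Filter.cocompact ℝ) (nhds 0))
    (hsmall : Tendsto (fun s : ℝ => f s / |s| ^ (N - 1)) (nhdsWithin 0 {0}ᶜ) (nhds 0)) :
    ∀ η > (0 : ℝ), ∀ α > α₀, ∀ q : ℝ, 0 ≤ q → ∃ C > (0 : ℝ), ∀ s : ℝ,
      |f s * s| ≤ η * |s| ^ N +
        C * |s| ^ q * (Real.exp (α * |s| ^ ((N : ℝ) / ((N : ℝ) - 1))) - SN N α s) := by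
  intro η hη α hα q hq
  have hN2 : (2 : ℝ) ≤ (N : ℝ) := by exact_mod_cast hN
  have hN1 : (1 : ℝ) ≤ (N : ℝ) - 1 := by linarith
  have hN1' : (0 : ℝ) < (N : ℝ) - 1 := by linarith
  set p : ℝ := (N : ℝ) / ((N : ℝ) - 1) with hp_def
  have hp1 : 1 ≤ p := by
    rw [hp_def, le_div_iff₀ hN1']; linarith
  have hp0 : 0 < p := lt_of_lt_of_le one_pos hp1
  have hα0 : 0 < α := lt_trans hα₀ hα
  set α' : ℝ := (α + α₀) / 2 with hα'_def
  have hα'1 : α₀ < α' := by rw [hα'_def]; linarith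
  have hα'2 : α' < α := by rw [hα'_def]; linarith
  have hα'0 : 0 < α' := lt_trans hα₀ hα'1
  set β : ℝ := α - α' with hβ_def
  have hβ0 : 0 < β := by rw [hβ_def]; linarith
  -- nonnegativity and lower bounds for E s = exp(α |s|^p) - SN N α s
  have hxnn : ∀ s : ℝ, 0 ≤ α * |s| ^ p :=
    fun s => mul_nonneg hα0.le (Real.rpow_nonneg (abs_nonneg s) p)
  have hE0 : ∀ s : ℝ, 0 ≤ Real.exp (α * |s| ^ p) - SN N α s := by
    intro s
    rw [sub_nonneg, SN_eq]
    exact Real.sum_le_exp_of_nonneg (hxnn s) (N - 1)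
  have hElb : ∀ s : ℝ, (α * |s| ^ p) ^ (N - 1) / (Nat.factorial (N - 1)) ≤
      Real.exp (α * |s| ^ p) - SN N α s := by
    intro s
    have h1 : ∑ k ∈ Finset.range N, (α * |s| ^ p) ^ k / (Nat.factorial k) ≤
        Real.exp (α * |s| ^ p) := Real.sum_le_exp_of_nonneg (hxnn s) N
    have h2 : Finset.range N = Finset.range ((N - 1) + 1) := by congr 1; omega
    rw [h2, Finset.sum_range_succ] at h1
    rw [SN_eq]
    linarith
  -- global bound M
  have habs : Continuous fun s : ℝ => |s| ^ p :=
    continuous_abs.rpow_const fun x => Or.inr hp0.le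
  have hcont : Continuous fun s : ℝ => |f s| * Real.exp (-(α' * |s| ^ p)) :=
    hf.abs.mul ((continuous_const.mul habs).neg.rexp)
  obtain ⟨K, hK, hKb⟩ := (Filter.hasBasis_cocompact.eventually_iff).mp
    ((Metric.tendsto_nhds.mp (hcrit α' hα'1)) 1 one_pos)
  obtain ⟨B, hB⟩ := hK.exists_bound_of_continuousOn hcont.continuousOn
  set M : ℝ := max B 1 with hM_def
  have hM1 : (1 : ℝ) ≤ M := le_max_right B 1
  have hM0 : (0 : ℝ) < M := lt_of_lt_of_le one_pos hM1
  have hMf : ∀ s : ℝ, |f s| ≤ M * Real.exp (α' * |s| ^ p) := by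
    intro s
    have hh : |f s| * Real.exp (-(α' * |s| ^ p)) ≤ M := by
      by_cases hs : s ∈ K
      · exact le_trans (le_trans (le_abs_self _) (hB s hs)) (le_max_left B 1)
      · have := hKb hs
        rw [Real.dist_eq, sub_zero] at this
        exact le_trans (le_trans (le_abs_self _) this.le) hM1
    calc |f s| = |f s| * Real.exp (-(α' * |s| ^ p)) * Real.exp (α' * |s| ^ p) := by
          rw [mul_assoc, ← Real.exp_add]; simp
      _ ≤ M * Real.exp (α' * |s| ^ p) :=
          mul_le_mul_of_nonneg_right hh (Real.exp_nonneg _)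
  -- small s bound
  rw [Metric.tendsto_nhdsWithin_nhds] at hsmall
  obtain ⟨δ, hδ0, hδ⟩ := hsmall η hη
  have hsmall' : ∀ s : ℝ, s ≠ 0 → |s| < δ → |f s| ≤ η * |s| ^ (N - 1) := by
    intro s hs hsδ
    have h1 := hδ (x := s) (by simpa using hs) (by rwa [Real.dist_eq, sub_zero])
    rw [Real.dist_eq, sub_zero, abs_div, abs_of_nonneg (pow_nonneg (abs_nonneg s) _)] at h1
    have hpos : (0 : ℝ) < |s| ^ (N - 1) := pow_pos (abs_pos.mpr hs) _
    rw [div_lt_iff₀ hpos] at h1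
    linarith
  -- the threshold
  set X : ℝ := max 1 (2 * (N - 1) * (Nat.factorial N)) with hX_def
  have hX1 : (1 : ℝ) ≤ X := le_max_left _ _
  have hX2 : 2 * ((N : ℝ) - 1) * (Nat.factorial N : ℝ) ≤ X := le_max_right _ _
  set T : ℝ := max (max 1 δ) (max (8 * M / β ^ 2) (X / α)) with hT_def
  have hT1 : (1 : ℝ) ≤ T := le_trans (le_max_left 1 δ) (le_max_left _ _)
  have hT0 : (0 : ℝ) < T := lt_of_lt_of_le one_pos hT1
  have hTM : 8 * M / β ^ 2 ≤ T := le_trans (le_max_left _ _) (le_max_right _ _)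
  have hTX : X / α ≤ T := le_trans (le_max_right _ _) (le_max_right _ _)
  clear_value α' β M X T
  -- constant for the middle regime
  set g₀ : ℝ := δ ^ q * ((α * δ ^ p) ^ (N - 1) / (Nat.factorial (N - 1))) with hg₀_def
  have hg₀ : 0 < g₀ := by
    apply mul_pos (Real.rpow_pos_of_pos hδ0 q)
    apply div_pos (pow_pos (mul_pos hα0 (Real.rpow_pos_of_pos hδ0 p)) _)
    exact_mod_cast Nat.factorial_pos (N - 1)
  set C : ℝ := M * Real.exp (α' * T ^ p) * T / g₀ + 1 with hC_def
  have hC1 : (1 : ℝ) ≤ C := by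
    rw [hC_def]
    have : 0 ≤ M * Real.exp (α' * T ^ p) * T / g₀ := by positivity
    linarith
  have hC0 : (0 : ℝ) < C := lt_of_lt_of_le one_pos hC1
  clear_value g₀ C
  refine ⟨C, hC0, fun s => ?_⟩
  have hEnn := hE0 s
  have hsqnn : (0 : ℝ) ≤ |s| ^ q := Real.rpow_nonneg (abs_nonneg s) q
  have hRHS2 : 0 ≤ C * |s| ^ q * (Real.exp (α * |s| ^ p) - SN N α s) := by
    positivity
  by_cases hs0 : s = 0
  · subst hs0
    have hL : |f 0 * 0| = 0 := by simp
    rw [hL]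
    have hR : 0 ≤ η * |(0 : ℝ)| ^ N := by positivity
    linarith [hRHS2]
  by_cases hsδ : |s| < δ
  · -- small regime
    have h1 := hsmall' s hs0 hsδ
    have h2 : |f s * s| ≤ η * |s| ^ N := by
      rw [abs_mul]
      calc |f s| * |s| ≤ η * |s| ^ (N - 1) * |s| :=
            mul_le_mul_of_nonneg_right h1 (abs_nonneg s)
        _ = η * |s| ^ N := by
            rw [mul_assoc, ← pow_succ]
            congr 2
            omega
    linarith
  push_neg at hsδ
  -- now δ ≤ |s|
  have hsnn : (0 : ℝ) ≤ |s| := abs_nonneg s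
  have hMs : |f s * s| ≤ M * Real.exp (α' * |s| ^ p) * |s| := by
    rw [abs_mul]
    exact mul_le_mul_of_nonneg_right (hMf s) (abs_nonneg s)
  have hmain : |f s * s| ≤ C * |s| ^ q * (Real.exp (α * |s| ^ p) - SN N α s) := by
    by_cases hsT : |s| ≤ T
    · -- middle regime
      have hF : |f s * s| ≤ M * Real.exp (α' * T ^ p) * T := by
        refine hMs.trans ?_
        have h1 : |s| ^ p ≤ T ^ p := Real.rpow_le_rpow hsnn hsT hp0.le
        have h2 : Real.exp (α' * |s| ^ p) ≤ Real.exp (α' * T ^ p) :=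
          Real.exp_le_exp.mpr (mul_le_mul_of_nonneg_left h1 hα'0.le)
        have h3 : M * Real.exp (α' * |s| ^ p) ≤ M * Real.exp (α' * T ^ p) :=
          mul_le_mul_of_nonneg_left h2 hM0.le
        exact mul_le_mul h3 hsT hsnn (by positivity)
      have hG : g₀ ≤ |s| ^ q * (Real.exp (α * |s| ^ p) - SN N α s) := by
        have h1 : δ ^ q ≤ |s| ^ q := Real.rpow_le_rpow hδ0.le hsδ hq
        have h2 : (α * δ ^ p) ^ (N - 1) / (Nat.factorial (N - 1)) ≤
            Real.exp (α * |s| ^ p) - SN N α s := by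
          refine le_trans ?_ (hElb s)
          have hfacpos : (0 : ℝ) < (Nat.factorial (N - 1) : ℝ) := by
            exact_mod_cast Nat.factorial_pos (N - 1)
          apply (div_le_div_iff_of_pos_right hfacpos).mpr
          apply pow_le_pow_left₀ (by positivity)
          exact mul_le_mul_of_nonneg_left (Real.rpow_le_rpow hδ0.le hsδ hp0.le) hα0.le
        calc g₀ ≤ |s| ^ q * ((α * δ ^ p) ^ (N - 1) / (Nat.factorial (N - 1))) := by
              rw [hg₀_def]
              exact mul_le_mul_of_nonneg_right h1 (by positivity)
          _ ≤ |s| ^ q * (Real.exp (α * |s| ^ p) - SN N α s) :=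
              mul_le_mul_of_nonneg_left h2 hsqnn
      calc |f s * s| ≤ M * Real.exp (α' * T ^ p) * T := hF
        _ = (M * Real.exp (α' * T ^ p) * T / g₀) * g₀ := by field_simp
        _ ≤ C * g₀ := by
            apply mul_le_mul_of_nonneg_right _ hg₀.le
            rw [hC_def]; linarith
        _ ≤ C * (|s| ^ q * (Real.exp (α * |s| ^ p) - SN N α s)) :=
            mul_le_mul_of_nonneg_left hG hC0.le
        _ = C * |s| ^ q * (Real.exp (α * |s| ^ p) - SN N α s) := by ring
    · -- large regime
      push_neg at hsT
      set t : ℝ := |s| with ht_def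
      have ht1 : (1 : ℝ) ≤ t := le_trans hT1 hsT.le
      have htp : t ≤ t ^ p := by
        calc t = t ^ (1 : ℝ) := (Real.rpow_one t).symm
          _ ≤ t ^ p := Real.rpow_le_rpow_of_exponent_le ht1 hp1
      have htM : 8 * M / β ^ 2 ≤ t := le_trans hTM hsT.le
      have htX : X / α ≤ t := le_trans hTX hsT.le
      have hxX : X ≤ α * t := by
        rw [div_le_iff₀ hα0] at htX; linarith
      have hx1 : (1 : ℝ) ≤ α * t ^ p := by
        have : α * t ≤ α * t ^ p := mul_le_mul_of_nonneg_left htp hα0.le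
        linarith [hxX, hX1]
      -- (i) partial sum at most half exp
      have hSi : SN N α s ≤ Real.exp (α * t ^ p) / 2 := by
        rw [SN_eq]
        apply S_half (N - 1) (by omega)
        · exact hx1
        · have h1 : (2 : ℝ) * ((N - 1 : ℕ) : ℝ) * ((Nat.factorial ((N - 1) + 1) : ℕ) : ℝ) ≤ X := by
            have h2 : (N - 1) + 1 = N := by omega
            have h3 : ((N - 1 : ℕ) : ℝ) = (N : ℝ) - 1 := by
              rw [Nat.cast_sub (by omega : 1 ≤ N), Nat.cast_one]
            rw [h2, h3]
            exact hX2
          have hcmp : α * t ≤ α * t ^ p := mul_le_mul_of_nonneg_left htp hα0.le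
          linarith [hxX]
      -- (ii) M * t * exp(α' t^p) ≤ (1/2) t^q exp(α t^p)
      have htq : (1 : ℝ) ≤ t ^ q := by
        calc (1 : ℝ) = t ^ (0 : ℝ) := (Real.rpow_zero t).symm
          _ ≤ t ^ q := Real.rpow_le_rpow_of_exponent_le ht1 hq
      have hβt : 0 ≤ β * t := by positivity
      have hii : M * t ≤ Real.exp (β * t ^ p) / 2 := by
        have h1 : 8 * M ≤ β ^ 2 * t := by
          rw [div_le_iff₀ (by positivity)] at htM; linarith
        have ht0 : (0 : ℝ) ≤ t := le_trans zero_le_one ht1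
        have h2 : M * t ≤ (β * t) ^ 2 / 8 := by
          have hmul := mul_le_mul_of_nonneg_right h1 ht0
          have hsq : (β * t) ^ 2 = β ^ 2 * t * t := by ring
          rw [hsq]
          linarith only [hmul]
        have h3 : (β * t) ^ 2 / 4 ≤ Real.exp (β * t) := sq_div_four_le_exp _ hβt
        have h4 : Real.exp (β * t) ≤ Real.exp (β * t ^ p) :=
          Real.exp_le_exp.mpr (mul_le_mul_of_nonneg_left htp hβ0.le)
        linarith
      have hsplit : Real.exp (α * t ^ p) = Real.exp (α' * t ^ p) * Real.exp (β * t ^ p) := by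
        rw [← Real.exp_add]; congr 1; rw [hβ_def]; ring
      have hbig : M * Real.exp (α' * t ^ p) * t ≤
          t ^ q * (Real.exp (α * t ^ p) - SN N α s) := by
        have h5 : M * Real.exp (α' * t ^ p) * t ≤
            Real.exp (α' * t ^ p) * (Real.exp (β * t ^ p) / 2) := by
          have := mul_le_mul_of_nonneg_left hii (Real.exp_nonneg (α' * t ^ p))
          calc M * Real.exp (α' * t ^ p) * t = Real.exp (α' * t ^ p) * (M * t) := by ring
            _ ≤ Real.exp (α' * t ^ p) * (Real.exp (β * t ^ p) / 2) := this
        have h6 : Real.exp (α' * t ^ p) * (Real.exp (β * t ^ p) / 2) =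
            Real.exp (α * t ^ p) / 2 := by rw [hsplit]; ring
        have h7 : Real.exp (α * t ^ p) / 2 ≤ Real.exp (α * t ^ p) - SN N α s := by
          linarith [hSi]
        have h8 : Real.exp (α * t ^ p) - SN N α s ≤
            t ^ q * (Real.exp (α * t ^ p) - SN N α s) :=
          le_mul_of_one_le_left (hE0 s) htq
        linarith only [h5, h6, h7, h8]
      calc |f s * s| ≤ M * Real.exp (α' * t ^ p) * t := hMs
        _ ≤ t ^ q * (Real.exp (α * t ^ p) - SN N α s) := hbig
        _ ≤ C * (t ^ q * (Real.exp (α * t ^ p) - SN N α s)) :=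
            le_mul_of_one_le_left (mul_nonneg hsqnn (hE0 s)) hC1
        _ = C * t ^ q * (Real.exp (α * t ^ p) - SN N α s) := by ring
  have hηnn : 0 ≤ η * |s| ^ N := by positivity
  linarith
end
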